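/- Dispersion relation for the exponential kernel: let E > 0, ρ > 0, l₀ > 0, and let T be the normalized exponential convolution operator (Tψ)(x) = (1/(2 l₀)) ∫_ℝ exp(−|x−s|/l₀) ψ(s) ds. For k, ω ∈ ℝ, the plane wave u(x,t) = exp(i(k x − ω t)) satisfies the nonlocal elastodynamic equation E · (d/dx)[ T( T( ∂_x u(·,t) ) ) ](x) = ρ · ∂²_t u(x,t) for all x, t ∈ ℝ if and only if ω² = (E/ρ) · k² / (1 + k² l₀²)². -/

import Mathlib

open MeasureTheory

/-- The normalized exponential convolution operator
`(Tψ)(x) = (1/(2 l₀)) ∫ exp(−|x−s|/l₀) ψ(s) ds`. -/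
noncomputable def expConvOp (l₀ : ℝ) (ψ : ℝ → ℂ) (x : ℝ) : ℂ :=
  (1 / (2 * l₀) : ℝ) * ∫ s : ℝ, (Real.exp (-|x - s| / l₀) : ℂ) * ψ s

/-- The plane wave `u(x,t) = exp(i(kx − ωt))`. -/
noncomputable def planeWave (k ω : ℝ) (x t : ℝ) : ℂ :=
  Complex.exp (Complex.I * ((k : ℂ) * x - (ω : ℂ) * t))

section helperNonlocal
open Complex Filter Topology Set


lemma integrableOn_cexp_Ioi {c : ℂ} (hc : 0 < c.re) :
    IntegrableOn (fun x : ℝ => Complex.exp (-c * x)) (Ioi 0) := by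
  refine (exp_neg_integrableOn_Ioi 0 hc).mono' ?_ ?_
  · exact (Complex.continuous_exp.comp (by continuity)).aestronglyMeasurable
  · filter_upwards with x
    simp [Complex.norm_exp]

lemma integral_cexp_Ioi {c : ℂ} (hc : 0 < c.re) :
    ∫ x : ℝ in Ioi 0, Complex.exp (-c * x) = 1 / c := by
  have hc0 : c ≠ 0 := fun h => by simp [h] at hc
  have hd : ∀ x ∈ Ici (0:ℝ), HasDerivAt (fun x : ℝ => -Complex.exp (-c * x) / c)
      (Complex.exp (-c * x)) x := by
    intro x _
    have h1 : HasDerivAt (fun x : ℝ => -c * (x:ℂ)) (-c) x := by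
      simpa using (Complex.ofRealCLM.hasDerivAt (x := x)).const_mul (-c)
    have h2 : HasDerivAt (fun x : ℝ => Complex.exp (-c * x)) (Complex.exp (-c * x) * (-c)) x :=
      h1.cexp
    have := (h2.neg).div_const c
    exact this.congr_deriv (by rw [mul_neg, neg_neg, mul_div_assoc, div_self hc0, mul_one])
  have ht : Tendsto (fun x : ℝ => -Complex.exp (-c * x) / c) atTop (𝓝 0) := by
    rw [tendsto_zero_iff_norm_tendsto_zero]
    have : (fun x : ℝ => ‖-Complex.exp (-c * x) / c‖)
        = fun x : ℝ => Real.exp (-(c.re * x)) / ‖c‖ := by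
      funext x
      simp [Complex.norm_exp]
    rw [this]
    have h3 : Tendsto (fun x : ℝ => c.re * x) atTop atTop :=
      (tendsto_const_mul_atTop_of_pos hc).mpr tendsto_id
    simpa [Function.comp_def] using (Real.tendsto_exp_atBot.comp (tendsto_neg_atBot_iff.mpr h3)).div_const (‖c‖)
  have := integral_Ioi_of_hasDerivAt_of_tendsto' hd (integrableOn_cexp_Ioi hc) ht
  rw [this]
  field_simp
  simp

lemma integral_exp_abs_mul {l₀ : ℝ} (hl₀ : 0 < l₀) (k : ℝ) :
    ∫ u : ℝ, (Real.exp (-|u| / l₀) : ℂ) * Complex.exp (-(Complex.I * k) * u)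
      = 2 * l₀ / (1 + k ^ 2 * l₀ ^ 2) := by
  set c₁ : ℂ := ((1/l₀ : ℝ) : ℂ) + Complex.I * k with hc₁
  set c₂ : ℂ := ((1/l₀ : ℝ) : ℂ) - Complex.I * k with hc₂
  have hre₁ : 0 < c₁.re := by simp [hc₁, hl₀]
  have hre₂ : 0 < c₂.re := by simp [hc₂, hl₀]
  set f : ℝ → ℂ := fun u => (Real.exp (-|u| / l₀) : ℂ) * Complex.exp (-(Complex.I * k) * u)
    with hf
  have heq₁ : ∀ u : ℝ, 0 ≤ u → f u = Complex.exp (-c₁ * u) := by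
    intro u hu
    rw [hf]
    simp only [_root_.abs_of_nonneg hu]
    rw [Complex.ofReal_exp, ← Complex.exp_add]
    congr 1
    rw [hc₁]
    push_cast
    ring
  have heq₂ : ∀ u : ℝ, u ≤ 0 → f u = Complex.exp (-c₂ * ((-u : ℝ) : ℂ)) := by
    intro u hu
    rw [hf]
    simp only [abs_of_nonpos hu]
    rw [Complex.ofReal_exp, ← Complex.exp_add]
    congr 1
    rw [hc₂]
    push_cast
    ring
  have hIoi : ∫ u in Set.Ioi (0:ℝ), f u = 1 / c₁ := by
    rw [setIntegral_congr_fun measurableSet_Ioi (fun u hu => heq₁ u (le_of_lt hu))]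
    exact integral_cexp_Ioi hre₁
  have hIic : ∫ u in Set.Iic (0:ℝ), f u = 1 / c₂ := by
    rw [setIntegral_congr_fun measurableSet_Iic (fun u hu => heq₂ u hu)]
    rw [integral_comp_neg_Iic 0 (fun v => Complex.exp (-c₂ * v)), neg_zero]
    exact integral_cexp_Ioi hre₂
  have hInt₁ : IntegrableOn f (Set.Ioi (0:ℝ)) :=
    (integrableOn_cexp_Ioi hre₁).congr_fun (fun u hu => (heq₁ u (le_of_lt hu)).symm)
      measurableSet_Ioi
  have hInt₂ : IntegrableOn f (Set.Iic (0:ℝ)) := by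
    rw [IntegrableOn, ← Measure.map_neg_eq_self (volume : Measure ℝ)]
    have m : MeasurableEmbedding fun x : ℝ => -x := (Homeomorph.neg ℝ).measurableEmbedding
    rw [m.restrict_map, m.integrable_map_iff]
    have : IntegrableOn (fun x : ℝ => f (-x)) (Set.Ici (0:ℝ)) := by
      rw [integrableOn_Ici_iff_integrableOn_Ioi]
      refine (integrableOn_cexp_Ioi hre₂).congr_fun (fun u hu => ?_) measurableSet_Ioi
      rw [heq₂ (-u) (by simpa using le_of_lt hu)]
      norm_num
    simpa [IntegrableOn, Function.comp_def, Set.neg_preimage, Set.neg_Iic] using this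
  have hsplit := intervalIntegral.integral_Iic_add_Ioi (b := (0:ℝ)) hInt₂ hInt₁
  have hkl : (1 + (k:ℂ) ^ 2 * (l₀:ℂ) ^ 2) ≠ 0 := by
    have : (0:ℝ) < 1 + k ^ 2 * l₀ ^ 2 := by positivity
    intro h
    rw [show (1 + (k:ℂ) ^ 2 * (l₀:ℂ) ^ 2) = ((1 + k ^ 2 * l₀ ^ 2 : ℝ) : ℂ) by push_cast; ring] at h
    exact_mod_cast this.ne' (by exact_mod_cast h)
  have hc₁0 : c₁ ≠ 0 := fun h => by simp [h] at hre₁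
  have hc₂0 : c₂ ≠ 0 := fun h => by simp [h] at hre₂
  have hl0 : (l₀ : ℂ) ≠ 0 := by exact_mod_cast hl₀.ne'
  calc ∫ u : ℝ, f u = (∫ u in Set.Iic (0:ℝ), f u) + ∫ u in Set.Ioi (0:ℝ), f u := hsplit.symm
    _ = 1 / c₂ + 1 / c₁ := by rw [hIic, hIoi]
    _ = 2 * l₀ / (1 + k ^ 2 * l₀ ^ 2) := by
        rw [hc₁] at hc₁0
        rw [hc₂] at hc₂0
        rw [hc₁, hc₂]
        push_cast at hc₁0 hc₂0 ⊢
        rw [div_add_div _ _ hc₂0 hc₁0, div_eq_div_iff (mul_ne_zero hc₂0 hc₁0) hkl]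
        ring_nf
        rw [Complex.I_sq]
        field_simp
        ring

lemma hasDerivAt_cexp_real (c : ℂ) (x : ℝ) :
    HasDerivAt (fun y : ℝ => Complex.exp (c * y)) (c * Complex.exp (c * x)) x := by
  have h : HasDerivAt (fun y : ℝ => c * (y : ℂ)) c x := by
    simpa using (Complex.ofRealCLM.hasDerivAt (x := x)).const_mul c
  simpa [mul_comm] using h.cexp

lemma expConvOp_const_mul (l₀ : ℝ) (a : ℂ) (ψ : ℝ → ℂ) (x : ℝ) :
    expConvOp l₀ (fun z => a * ψ z) x = a * expConvOp l₀ ψ x := by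
  unfold expConvOp
  have h : ∀ s : ℝ, (Real.exp (-|x - s| / l₀) : ℂ) * (a * ψ s)
      = a * ((Real.exp (-|x - s| / l₀) : ℂ) * ψ s) := fun s => by ring
  simp_rw [h, integral_const_mul]
  ring

lemma expConvOp_cexp {l₀ : ℝ} (hl₀ : 0 < l₀) (k x : ℝ) :
    expConvOp l₀ (fun z : ℝ => Complex.exp (Complex.I * (k : ℂ) * (z : ℂ))) x
      = (1 / (1 + (k : ℂ) ^ 2 * (l₀ : ℂ) ^ 2)) * Complex.exp (Complex.I * (k : ℂ) * (x : ℂ)) := by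
  unfold expConvOp
  set F : ℝ → ℂ := fun u => Complex.exp (Complex.I * (k : ℂ) * (x : ℂ)) *
    ((Real.exp (-|u| / l₀) : ℂ) * Complex.exp (-(Complex.I * k) * u)) with hF
  have key : ∀ s : ℝ, (Real.exp (-|x - s| / l₀) : ℂ) * Complex.exp (Complex.I * (k : ℂ) * (s : ℂ))
      = F (x - s) := by
    intro s
    rw [hF]
    simp only
    have h0 : Complex.exp (Complex.I * (k : ℂ) * (s : ℂ))
        = Complex.exp (-(Complex.I * k) * ((x - s : ℝ) : ℂ)) *
          Complex.exp (Complex.I * (k : ℂ) * (x : ℂ)) := by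
      rw [← Complex.exp_add]
      congr 1
      push_cast
      ring
    rw [h0]
    ring
  simp_rw [key]
  rw [MeasureTheory.integral_sub_left_eq_self F volume x]
  rw [hF]
  simp only
  rw [integral_const_mul, integral_exp_abs_mul hl₀ k]
  have h1 : ((1 : ℂ) + (k : ℂ) ^ 2 * (l₀ : ℂ) ^ 2) ≠ 0 := by
    have hp : (0:ℝ) < 1 + k ^ 2 * l₀ ^ 2 := by positivity
    intro h
    rw [show (1 + (k:ℂ) ^ 2 * (l₀:ℂ) ^ 2) = ((1 + k ^ 2 * l₀ ^ 2 : ℝ) : ℂ) by push_cast; ring] at h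
    exact hp.ne' (by exact_mod_cast h)
  have hl0 : (l₀ : ℂ) ≠ 0 := by exact_mod_cast hl₀.ne'
  push_cast
  field_simp

lemma planeWave_factor (k ω x t : ℝ) :
    planeWave k ω x t
      = Complex.exp (Complex.I * (k : ℂ) * (x : ℂ)) * Complex.exp (-(Complex.I * ω) * t) := by
  unfold planeWave
  rw [← Complex.exp_add]
  congr 1
  ring

lemma deriv_planeWave_x (k ω t : ℝ) :
    (fun z : ℝ => deriv (fun x' : ℝ => planeWave k ω x' t) z)
      = fun z : ℝ => (Complex.I * (k : ℂ) * Complex.exp (-(Complex.I * ω) * t)) *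
          Complex.exp (Complex.I * (k : ℂ) * (z : ℂ)) := by
  funext z
  rw [show (fun x' : ℝ => planeWave k ω x' t)
      = fun y : ℝ => Complex.exp (Complex.I * (k : ℂ) * (y : ℂ)) * Complex.exp (-(Complex.I * ω) * t)
    from funext fun y => planeWave_factor k ω y t]
  rw [((hasDerivAt_cexp_real (Complex.I * (k : ℂ)) z).mul_const
    (Complex.exp (-(Complex.I * ω) * t))).deriv]
  ring

lemma deriv2_planeWave_t (k ω x t : ℝ) :
    deriv (deriv (fun τ : ℝ => planeWave k ω x τ)) t = -(ω : ℂ) ^ 2 * planeWave k ω x t := by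
  have hfun : (fun τ : ℝ => planeWave k ω x τ)
      = fun τ : ℝ => Complex.exp (Complex.I * (k : ℂ) * (x : ℂ)) *
          Complex.exp (-(Complex.I * ω) * τ) :=
    funext fun τ => planeWave_factor k ω x τ
  have h1 : deriv (fun τ : ℝ => planeWave k ω x τ)
      = fun τ : ℝ => (-(Complex.I * ω)) *
          (Complex.exp (Complex.I * (k : ℂ) * (x : ℂ)) * Complex.exp (-(Complex.I * ω) * τ)) := by
    funext τ
    rw [hfun, ((hasDerivAt_cexp_real (-(Complex.I * ω)) τ).const_mul
      (Complex.exp (Complex.I * (k : ℂ) * (x : ℂ)))).deriv]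
    ring
  rw [h1]
  have h2 := (((hasDerivAt_cexp_real (-(Complex.I * ω)) t).const_mul
      (Complex.exp (Complex.I * (k : ℂ) * (x : ℂ)))).const_mul (-(Complex.I * ω))).deriv
  rw [show (fun τ : ℝ => -(Complex.I * ↑ω) *
      (Complex.exp (Complex.I * (k : ℂ) * (x : ℂ)) * Complex.exp (-(Complex.I * ω) * τ)))
      = fun y : ℝ => -(Complex.I * ↑ω) *
      (fun τ : ℝ => Complex.exp (Complex.I * (k : ℂ) * (x : ℂ)) *
        Complex.exp (-(Complex.I * ω) * τ)) y from rfl]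
  rw [h2, planeWave_factor]
  ring_nf
  rw [Complex.I_sq]
  ring


end helperNonlocal

section mainNonlocal
open Complex Filter Topology Set
/-- dispersion relation for the exponential kernel: the plane wave
`exp(i(kx − ωt))` solves the nonlocal elastodynamic equation
`E (T(T(∂ₓu)))′ = ρ ∂²ₜu` iff `ω² = (E/ρ) k² / (1 + k² l₀²)²`. -/
theorem stmt_10 (E ρ l₀ : ℝ) (hE : 0 < E) (hρ : 0 < ρ) (hl₀ : 0 < l₀) (k ω : ℝ) :
    (∀ x t : ℝ,
      (E : ℂ) * deriv
          (fun y : ℝ => expConvOp l₀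
            (expConvOp l₀ (fun z : ℝ => deriv (fun x' : ℝ => planeWave k ω x' t) z)) y) x =
        (ρ : ℂ) * deriv (deriv (fun τ : ℝ => planeWave k ω x τ)) t) ↔
    ω ^ 2 = (E / ρ) * k ^ 2 / (1 + k ^ 2 * l₀ ^ 2) ^ 2 := by
  set K : ℂ := 1 + (k : ℂ) ^ 2 * (l₀ : ℂ) ^ 2 with hK
  have hpos : (0:ℝ) < 1 + k ^ 2 * l₀ ^ 2 := by positivity
  have hKr : ((1 + k ^ 2 * l₀ ^ 2 : ℝ) : ℂ) = K := by rw [hK]; push_cast; ring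
  have hK0 : K ≠ 0 := by rw [← hKr]; exact_mod_cast hpos.ne'
  have hρ0 : ρ ≠ 0 := hρ.ne'
  have hP0 : (1 + k ^ 2 * l₀ ^ 2) ≠ 0 := hpos.ne'
  have key : ∀ x t : ℝ, deriv
      (fun y : ℝ => expConvOp l₀
        (expConvOp l₀ (fun z : ℝ => deriv (fun x' : ℝ => planeWave k ω x' t) z)) y) x
      = (-(k : ℂ) ^ 2 / K ^ 2) * planeWave k ω x t := by
    intro x t
    rw [deriv_planeWave_x k ω t]
    have hT1 : expConvOp l₀ (fun z : ℝ =>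
        (Complex.I * (k : ℂ) * Complex.exp (-(Complex.I * ω) * t)) *
          Complex.exp (Complex.I * (k : ℂ) * (z : ℂ)))
        = fun y : ℝ => ((Complex.I * (k : ℂ) * Complex.exp (-(Complex.I * ω) * t)) * (1 / K)) *
            Complex.exp (Complex.I * (k : ℂ) * (y : ℂ)) := by
      funext y
      rw [expConvOp_const_mul, expConvOp_cexp hl₀, ← hK]
      ring
    have hT2 : expConvOp l₀ (fun y : ℝ =>
        ((Complex.I * (k : ℂ) * Complex.exp (-(Complex.I * ω) * t)) * (1 / K)) *
          Complex.exp (Complex.I * (k : ℂ) * (y : ℂ)))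
        = fun y : ℝ =>
            ((Complex.I * (k : ℂ) * Complex.exp (-(Complex.I * ω) * t)) * (1 / K) * (1 / K)) *
              Complex.exp (Complex.I * (k : ℂ) * (y : ℂ)) := by
      funext y
      rw [expConvOp_const_mul, expConvOp_cexp hl₀, ← hK]
      ring
    simp only [hT1, hT2]
    rw [((hasDerivAt_cexp_real (Complex.I * (k : ℂ)) x).const_mul
      ((Complex.I * (k : ℂ) * Complex.exp (-(Complex.I * ω) * t)) * (1 / K) * (1 / K))).deriv]
    rw [planeWave_factor]
    have hK0' : (1 + (k : ℂ) ^ 2 * (l₀ : ℂ) ^ 2) ≠ 0 := by rw [← hK]; exact hK0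
    rw [hK]
    field_simp
    ring_nf
    rw [Complex.I_sq]
    ring
  constructor
  · intro h
    have h00 := h 0 0
    rw [key 0 0, deriv2_planeWave_t k ω 0 0] at h00
    have hpw : planeWave k ω 0 0 ≠ 0 := Complex.exp_ne_zero _
    have hscal : (E : ℂ) * (-(k : ℂ) ^ 2 / K ^ 2) = (ρ : ℂ) * (-(ω : ℂ) ^ 2) := by
      rw [← mul_assoc, ← mul_assoc] at h00
      exact mul_right_cancel₀ hpw h00
    have hr : E * k ^ 2 = ρ * ω ^ 2 * (1 + k ^ 2 * l₀ ^ 2) ^ 2 := by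
      have h2 : ((E * k ^ 2 : ℝ) : ℂ) = ((ρ * ω ^ 2 * (1 + k ^ 2 * l₀ ^ 2) ^ 2 : ℝ) : ℂ) := by
        rw [hK] at hscal hK0
        push_cast
        field_simp at hscal
        linear_combination -hscal
      exact_mod_cast h2
    field_simp
    linear_combination -hr
  · intro h x t
    rw [key x t, deriv2_planeWave_t k ω x t]
    have hr : E * k ^ 2 = ρ * ω ^ 2 * (1 + k ^ 2 * l₀ ^ 2) ^ 2 := by
      field_simp at h
      linear_combination -h
    have hscal : (E : ℂ) * (-(k : ℂ) ^ 2 / K ^ 2) = (ρ : ℂ) * (-(ω : ℂ) ^ 2) := by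
      have h2 : ((E * k ^ 2 : ℝ) : ℂ) = ((ρ * ω ^ 2 * (1 + k ^ 2 * l₀ ^ 2) ^ 2 : ℝ) : ℂ) := by
        exact_mod_cast hr
      rw [hK] at hK0 ⊢
      push_cast at h2
      field_simp
      linear_combination -h2
    rw [← mul_assoc, ← mul_assoc, hscal]

end mainNonlocal
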